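/- Let q be a prime power and let G be a balanced quasi-arc of weight x > 0 in PG(2,q), i.e., a set of 3x+3 points partitioned as F ∪ G1 ∪ G2 ∪ G3 where F = {E1,E2,E3} are three non-collinear points, |G1|=|G2|=|G3|=x, G1 ⊆ line(E1,E2), G2 ⊆ line(E2,E3), G3 ⊆ line(E3,E1), and every line other than the three lines EiEj meets G in at most 2 points. Then x ≤ (q-1)/2. -/
import Mathlib

open scoped Classical

open Module Projectivization in
/-- Fintype instance for the projectivization of a finite vector space. -/
noncomputable instance quasiArcFintypeP {F : Type*} [Field F] [Fintype F] :
    Fintype (Projectivization F (Fin 3 → F)) := by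
  unfold Projectivization; exact Quotient.fintype _

namespace QuasiArcAux

open Module Projectivization

variable {F : Type*} [Field F]

/-- A point contained in a point is equal to it. -/
lemma point_eq_of_le {V : Type*} [AddCommGroup V] [Module F V]
    {P Q : Projectivization F V} (h : P.submodule ≤ Q.submodule) : P = Q :=
  submodule_injective (Submodule.eq_of_le_of_finrank_eq h
    (by rw [P.finrank_submodule, Q.finrank_submodule]))

lemma finrank_sup_le {V : Type*} [AddCommGroup V] [Module F V]
    (P Q : Projectivization F V) :
    finrank F (P.submodule ⊔ Q.submodule : Submodule F V) ≤ 2 := by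
  have h := Submodule.finrank_sup_add_finrank_inf_eq P.submodule Q.submodule
  rw [P.finrank_submodule, Q.finrank_submodule] at h
  omega

lemma finrank_sup_of_ne {V : Type*} [AddCommGroup V] [Module F V] [FiniteDimensional F V]
    {P Q : Projectivization F V} (h : P ≠ Q) :
    finrank F (P.submodule ⊔ Q.submodule : Submodule F V) = 2 := by
  have hinf : P.submodule ⊓ Q.submodule = ⊥ := by
    by_contra hb
    have h1 : 0 < finrank F (P.submodule ⊓ Q.submodule : Submodule F V) := by
      rcases Nat.eq_zero_or_pos (finrank F (P.submodule ⊓ Q.submodule : Submodule F V)) with h0 | h0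
      · exact absurd (Submodule.finrank_eq_zero.mp h0) hb
      · exact h0
    have hle1 : finrank F (P.submodule ⊓ Q.submodule : Submodule F V) ≤ 1 := by
      have := Submodule.finrank_mono (inf_le_left :
        P.submodule ⊓ Q.submodule ≤ P.submodule)
      rwa [P.finrank_submodule] at this
    have hP : P.submodule ⊓ Q.submodule = P.submodule :=
      Submodule.eq_of_le_of_finrank_eq inf_le_left (by rw [P.finrank_submodule]; omega)
    have hQ : P.submodule ⊓ Q.submodule = Q.submodule :=
      Submodule.eq_of_le_of_finrank_eq inf_le_right (by rw [Q.finrank_submodule]; omega)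
    exact h (submodule_injective (hP.symm.trans hQ))
  have h2 := Submodule.finrank_sup_add_finrank_inf_eq P.submodule Q.submodule
  rw [P.finrank_submodule, Q.finrank_submodule, hinf, finrank_bot] at h2
  omega

/-- Two distinct lines in a 3-dimensional space meet in at most one point. -/
lemma meet_unique {V : Type*} [AddCommGroup V] [Module F V] [FiniteDimensional F V]
    (hV : finrank F V = 3) {A B : Submodule F V}
    (hA : finrank F A = 2) (hB : finrank F B = 2) (hAB : A ≠ B)
    {R S : Projectivization F V} (hRA : R.submodule ≤ A) (hRB : R.submodule ≤ B)
    (hSA : S.submodule ≤ A) (hSB : S.submodule ≤ B) : R = S := by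
  have hsup : finrank F (A ⊔ B : Submodule F V) = 3 := by
    have hle : finrank F (A ⊔ B : Submodule F V) ≤ 3 := hV ▸ Submodule.finrank_le _
    have hge : 2 ≤ finrank F (A ⊔ B : Submodule F V) := hA ▸ Submodule.finrank_mono le_sup_left
    rcases Nat.lt_or_ge (finrank F (A ⊔ B : Submodule F V)) 3 with hlt | hge3
    · exfalso
      have h2 : finrank F (A ⊔ B : Submodule F V) = 2 := by omega
      have hAe : A = A ⊔ B := Submodule.eq_of_le_of_finrank_eq le_sup_left (by omega)
      have hBe : B = A ⊔ B := Submodule.eq_of_le_of_finrank_eq le_sup_right (by omega)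
      exact hAB (hAe.trans hBe.symm)
    · omega
  have hinf : finrank F (A ⊓ B : Submodule F V) = 1 := by
    have := Submodule.finrank_sup_add_finrank_inf_eq A B
    rw [hA, hB, hsup] at this; omega
  have hR : R.submodule = A ⊓ B :=
    Submodule.eq_of_le_of_finrank_eq (le_inf hRA hRB) (by rw [R.finrank_submodule, hinf])
  have hS : S.submodule = A ⊓ B :=
    Submodule.eq_of_le_of_finrank_eq (le_inf hSA hSB) (by rw [S.finrank_submodule, hinf])
  exact submodule_injective (hR.trans hS.symm)


section WithFintype
variable [Fintype F]

/-- A line in `PG(2,q)` contains exactly `q+1` points. -/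
lemma card_points_on_line (W : Submodule F (Fin 3 → F)) (hW : finrank F (W : Submodule F (Fin 3 → F)) = 2) :
    (Finset.univ.filter fun R : Projectivization F (Fin 3 → F) => R.submodule ≤ W).card
      = Fintype.card F + 1 := by
  classical
  have hq2 : 2 ≤ Fintype.card F := Fintype.one_lt_card
  set S := Finset.univ.filter fun R : Projectivization F (Fin 3 → F) => R.submodule ≤ W with hS
  set N : Finset (Fin 3 → F) := Finset.univ.filter (fun v => v ∈ W ∧ v ≠ 0) with hNdef
  have hone : (fun _ : Fin 3 => (1 : F)) ≠ 0 := by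
    intro hcon
    exact one_ne_zero (congrFun hcon 0)
  set g : (Fin 3 → F) → Projectivization F (Fin 3 → F) :=
    fun v => if hv : v ≠ 0 then mk F v hv else mk F (fun _ => 1) hone with hg
  have hmaps : ∀ v ∈ N, g v ∈ S := by
    intro v hv
    rw [hNdef, Finset.mem_filter] at hv
    obtain ⟨-, hvW, hv0⟩ := hv
    rw [hS, Finset.mem_filter]
    refine ⟨Finset.mem_univ _, ?_⟩
    rw [hg]; simp only [dif_pos hv0, submodule_mk]
    exact (Submodule.span_singleton_le_iff_mem v W).mpr hvW
  have hcardfun : ∀ (M : Submodule F (Fin 3 → F)),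
      (Finset.univ.filter (fun v => v ∈ M)).card = Fintype.card M := by
    intro M
    rw [Fintype.card_subtype]
  have hN : N.card + 1 = Fintype.card F ^ 2 := by
    have hNe : N = (Finset.univ.filter (fun v => v ∈ W)).erase 0 := by
      ext v
      simp only [hNdef, Finset.mem_filter, Finset.mem_erase, Finset.mem_univ, true_and]
      tauto
    rw [hNe, Finset.card_erase_of_mem (by simp [W.zero_mem]), hcardfun W]
    have := card_eq_pow_finrank (K := F) (V := W)
    rw [hW] at this
    rw [this]
    have : 0 < Fintype.card F ^ 2 := by positivity
    omega
  have hfiber : ∀ R ∈ S, (N.filter fun v => g v = R).card + 1 = Fintype.card F := by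
    intro R hR
    rw [hS, Finset.mem_filter] at hR
    have hRe : N.filter (fun v => g v = R)
        = (Finset.univ.filter (fun v => v ∈ R.submodule)).erase 0 := by
      ext v
      simp only [hNdef, Finset.filter_filter, Finset.mem_filter, Finset.mem_erase,
        Finset.mem_univ, true_and]
      constructor
      · rintro ⟨⟨hvW, hv0⟩, hgv⟩
        refine ⟨hv0, ?_⟩
        rw [hg] at hgv; simp only [dif_pos hv0] at hgv
        rw [← hgv, submodule_mk]
        exact Submodule.mem_span_singleton_self v
      · rintro ⟨hv0, hvR⟩
        have hsp : (Submodule.span F {v} : Submodule F (Fin 3 → F)) = R.submodule :=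
          Submodule.eq_of_le_of_finrank_eq
            ((Submodule.span_singleton_le_iff_mem v _).mpr hvR)
            (by rw [finrank_span_singleton hv0, R.finrank_submodule])
        refine ⟨⟨hR.2 hvR, hv0⟩, ?_⟩
        rw [hg]; simp only [dif_pos hv0]
        exact submodule_injective (by rw [submodule_mk, hsp])
    rw [hRe, Finset.card_erase_of_mem (by simp [Submodule.zero_mem]), hcardfun R.submodule]
    have := card_eq_pow_finrank (K := F) (V := R.submodule)
    rw [R.finrank_submodule, pow_one] at this
    omega
  have hsum := Finset.card_eq_sum_card_fiberwise hmaps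
  have hsum2 : N.card = S.card * (Fintype.card F - 1) := by
    rw [hsum]
    rw [Finset.sum_congr rfl (fun R hR => by have := hfiber R hR; omega : ∀ R ∈ S,
      (N.filter fun v => g v = R).card = Fintype.card F - 1)]
    rw [Finset.sum_const, smul_eq_mul]
  obtain ⟨k, hk⟩ : ∃ k, Fintype.card F = k + 2 := ⟨Fintype.card F - 2, by omega⟩
  rw [hk] at hN hsum2
  have hsub : k + 2 - 1 = k + 1 := rfl
  rw [hsub] at hsum2
  have e : (k + 2) ^ 2 = k * k + 4 * k + 4 := by ring
  rw [e] at hN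
  have hN' : N.card = k * k + 4 * k + 3 := by linarith
  have hmul : S.card * (k + 1) = (k + 3) * (k + 1) := by
    rw [← hsum2, hN']; ring
  have hfin : S.card = k + 3 := Nat.eq_of_mul_eq_mul_right (by omega) hmul
  rw [hk, hfin]


end WithFintype
end QuasiArcAux


/-- A balanced quasi-arc of weight `x` in the projective plane `PG(2,q)`:
three non-collinear fundamental points `E1, E2, E3` together with sets
`G1, G2, G3` of `x` points lying on the fundamental lines `E1E2`, `E2E3`,
`E3E1` respectively, forming (together with the fundamental points) a set of
`3x+3` points, such that every line other than the three fundamental lines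
meets the set in at most 2 points. -/
structure IsBalancedQuasiArc (F : Type*) [Field F] (x : ℕ)
    (E1 E2 E3 : Projectivization F (Fin 3 → F))
    (G1 G2 G3 : Finset (Projectivization F (Fin 3 → F))) : Prop where
  not_collinear : ¬ ∃ W : Submodule F (Fin 3 → F), Module.finrank F W ≤ 2 ∧
      E1.submodule ≤ W ∧ E2.submodule ≤ W ∧ E3.submodule ≤ W
  card_G1 : G1.card = x
  card_G2 : G2.card = x
  card_G3 : G3.card = x
  sub_G1 : ∀ P ∈ G1, Projectivization.submodule P ≤ E1.submodule ⊔ E2.submodule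
  sub_G2 : ∀ P ∈ G2, Projectivization.submodule P ≤ E2.submodule ⊔ E3.submodule
  sub_G3 : ∀ P ∈ G3, Projectivization.submodule P ≤ E3.submodule ⊔ E1.submodule
  card_total : ({E1, E2, E3} ∪ G1 ∪ G2 ∪ G3 : Finset _).card = 3 * x + 3
  secant : ∀ W : Submodule F (Fin 3 → F), Module.finrank F W = 2 →
      W ≠ E1.submodule ⊔ E2.submodule → W ≠ E2.submodule ⊔ E3.submodule →
      W ≠ E3.submodule ⊔ E1.submodule →
      (({E1, E2, E3} ∪ G1 ∪ G2 ∪ G3 : Finset _).filter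
        fun P => Projectivization.submodule P ≤ W).card ≤ 2


open Module Projectivization Finset

/-- A balanced quasi-arc of weight `x > 0` in `PG(2,q)` satisfies `x ≤ (q-1)/2`. -/
theorem stmt0 {F : Type*} [Field F] [Fintype F] {x : ℕ} (hx : 0 < x)
    {E1 E2 E3 : Projectivization F (Fin 3 → F)}
    {G1 G2 G3 : Finset (Projectivization F (Fin 3 → F))}
    (h : IsBalancedQuasiArc F x E1 E2 E3 G1 G2 G3) :
    x ≤ (Fintype.card F - 1) / 2 := by
  classical
  obtain ⟨hnc, hc1, hc2, hc3, hs1, hs2, hs3, hct, hsec⟩ := h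
  have hV3 : finrank F (Fin 3 → F) = 3 := Module.finrank_fin_fun F
  set W12 := E1.submodule ⊔ E2.submodule with hW12def
  set W23 := E2.submodule ⊔ E3.submodule with hW23def
  set W31 := E3.submodule ⊔ E1.submodule with hW31def
  -- the fundamental points are pairwise distinct
  have hE12 : E1 ≠ E2 := by
    rintro rfl
    exact hnc ⟨E1.submodule ⊔ E3.submodule, QuasiArcAux.finrank_sup_le E1 E3,
      le_sup_left, le_sup_left, le_sup_right⟩
  have hE23 : E2 ≠ E3 := by
    rintro rfl
    exact hnc ⟨E1.submodule ⊔ E2.submodule, QuasiArcAux.finrank_sup_le E1 E2,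
      le_sup_left, le_sup_right, le_sup_right⟩
  have hE13 : E1 ≠ E3 := by
    rintro rfl
    exact hnc ⟨E1.submodule ⊔ E2.submodule, QuasiArcAux.finrank_sup_le E1 E2,
      le_sup_left, le_sup_right, le_sup_left⟩
  have hrk12 : finrank F (W12 : Submodule F (Fin 3 → F)) = 2 := QuasiArcAux.finrank_sup_of_ne hE12
  have hrk23 : finrank F (W23 : Submodule F (Fin 3 → F)) = 2 := QuasiArcAux.finrank_sup_of_ne hE23
  have hrk31 : finrank F (W31 : Submodule F (Fin 3 → F)) = 2 :=
    QuasiArcAux.finrank_sup_of_ne hE13.symm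
  -- each fundamental point avoids the opposite fundamental line
  have hE3W12 : ¬ E3.submodule ≤ W12 := fun hle =>
    hnc ⟨W12, le_of_eq hrk12, le_sup_left, le_sup_right, hle⟩
  have hE1W23 : ¬ E1.submodule ≤ W23 := fun hle =>
    hnc ⟨W23, le_of_eq hrk23, hle, le_sup_left, le_sup_right⟩
  have hE2W31 : ¬ E2.submodule ≤ W31 := fun hle =>
    hnc ⟨W31, le_of_eq hrk31, le_sup_right, hle, le_sup_left⟩
  have hW1223 : W12 ≠ W23 := fun hw => hE3W12 (hw ▸ le_sup_right)
  have hW2331 : W23 ≠ W31 := fun hw => hE1W23 (hw ▸ le_sup_right)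
  have hW3112 : W31 ≠ W12 := fun hw => hE2W31 (hw.symm ▸ le_sup_right)
  -- points on two fundamental lines are fundamental points
  have meet1223 : ∀ R : Projectivization F (Fin 3 → F),
      R.submodule ≤ W12 → R.submodule ≤ W23 → R = E2 := fun R h1 h2 =>
    QuasiArcAux.meet_unique hV3 hrk12 hrk23 hW1223 h1 h2 le_sup_right le_sup_left
  have meet2331 : ∀ R : Projectivization F (Fin 3 → F),
      R.submodule ≤ W23 → R.submodule ≤ W31 → R = E3 := fun R h1 h2 =>
    QuasiArcAux.meet_unique hV3 hrk23 hrk31 hW2331 h1 h2 le_sup_right le_sup_left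
  have meet3112 : ∀ R : Projectivization F (Fin 3 → F),
      R.submodule ≤ W31 → R.submodule ≤ W12 → R = E1 := fun R h1 h2 =>
    QuasiArcAux.meet_unique hV3 hrk31 hrk12 hW3112 h1 h2 le_sup_right le_sup_left
  -- disjointness from the cardinality condition
  set A : Finset (Projectivization F (Fin 3 → F)) := {E1, E2, E3} with hAdef
  set B : Finset (Projectivization F (Fin 3 → F)) := A ∪ G1 ∪ G2 ∪ G3 with hBdef
  have hA3 : A.card ≤ 3 := by
    refine (Finset.card_insert_le _ _).trans ?_
    refine Nat.succ_le_succ ?_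
    refine (Finset.card_insert_le _ _).trans ?_
    simp
  have hu1 : (A ∪ G1).card ≤ A.card + x := by
    refine (Finset.card_union_le _ _).trans ?_; rw [hc1]
  have hu2 : (A ∪ G1 ∪ G2).card ≤ (A ∪ G1).card + x := by
    refine (Finset.card_union_le _ _).trans ?_; rw [hc2]
  have hu3 : B.card ≤ (A ∪ G1 ∪ G2).card + x := by
    refine (Finset.card_union_le _ _).trans ?_; rw [hc3]
  have hBcard : B.card = 3 * x + 3 := hct
  have hd3 : Disjoint (A ∪ G1 ∪ G2) G3 := by
    rw [← Finset.card_union_eq_card_add_card]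
    rw [← hBdef, hBcard, hc3]; omega
  have hd2 : Disjoint (A ∪ G1) G2 := by
    rw [← Finset.card_union_eq_card_add_card]
    rw [hc2]; omega
  have hd1 : Disjoint A G1 := by
    rw [← Finset.card_union_eq_card_add_card]
    rw [hc1]; omega
  -- pick a point P on G1
  obtain ⟨P, hP⟩ := Finset.card_pos.mp (by rw [hc1]; exact hx)
  have hPA : P ∉ A := fun hmem => (Finset.disjoint_left.mp hd1 hmem) hP
  have hPE1 : P ≠ E1 := fun hp => hPA (by rw [hAdef, hp]; simp)
  have hPE2 : P ≠ E2 := fun hp => hPA (by rw [hAdef, hp]; simp)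
  have hPE3 : P ≠ E3 := fun hp => hPA (by rw [hAdef, hp]; simp)
  have hPW12 : P.submodule ≤ W12 := hs1 P hP
  have hPnW23 : ¬ P.submodule ≤ W23 := fun hle => hPE2 (meet1223 P hPW12 hle)
  have hPnW31 : ¬ P.submodule ≤ W31 := fun hle => hPE1 (meet3112 P hle hPW12)
  -- the set T of points off the line E1E2 (other than E3's companions)
  set T : Finset (Projectivization F (Fin 3 → F)) := insert E3 (G2 ∪ G3) with hTdef
  have hE3G2 : E3 ∉ G2 := fun hmem =>
    (Finset.disjoint_left.mp hd2 (by rw [hAdef]; simp : E3 ∈ A ∪ G1)) hmem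
  have hE3G3 : E3 ∉ G3 := fun hmem =>
    (Finset.disjoint_left.mp hd3 (by rw [hAdef]; simp : E3 ∈ A ∪ G1 ∪ G2)) hmem
  have hG2G3 : Disjoint G2 G3 := by
    refine Finset.disjoint_left.mpr fun Q hQ2 hQ3 => ?_
    exact (Finset.disjoint_left.mp hd3 (by simp [hQ2] : Q ∈ A ∪ G1 ∪ G2)) hQ3
  have hTcard : T.card = 2 * x + 1 := by
    rw [hTdef, Finset.card_insert_of_notMem (by simp [hE3G2, hE3G3]),
      Finset.card_union_of_disjoint hG2G3, hc2, hc3]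
    omega
  -- facts about elements of T
  have hTP : ∀ Q ∈ T, Q ≠ P := by
    intro Q hQ
    rw [hTdef, Finset.mem_insert, Finset.mem_union] at hQ
    rcases hQ with rfl | hQ | hQ
    · exact Ne.symm hPE3
    · rintro rfl
      exact (Finset.disjoint_left.mp hd2 (by simp [hP] : Q ∈ A ∪ G1)) hQ
    · rintro rfl
      exact (Finset.disjoint_left.mp hd3 (by simp [hP] : Q ∈ A ∪ G1 ∪ G2)) hQ
  have hTA : ∀ Q ∈ T, Q ∈ B := by
    intro Q hQ
    rw [hTdef, Finset.mem_insert, Finset.mem_union] at hQ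
    rw [hBdef]
    rcases hQ with rfl | hQ | hQ
    · simp [hAdef]
    · simp [hQ]
    · simp [hQ]
  have hPB : P ∈ B := by rw [hBdef]; simp [hP]
  -- the line through P and Q is not fundamental
  have hLfund : ∀ Q ∈ T, P.submodule ⊔ Q.submodule ≠ W12 ∧
      P.submodule ⊔ Q.submodule ≠ W23 ∧ P.submodule ⊔ Q.submodule ≠ W31 := by
    intro Q hQ
    have hQ' := hQ
    rw [hTdef, Finset.mem_insert, Finset.mem_union] at hQ'
    refine ⟨?_, ?_, ?_⟩
    · intro hw
      have hQ12 : Q.submodule ≤ W12 := hw ▸ le_sup_right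
      rcases hQ' with rfl | hQ2 | hQ3
      · exact hE3W12 hQ12
      · have : Q = E2 := meet1223 Q hQ12 (hs2 Q hQ2)
        exact (Finset.disjoint_left.mp hd2 (by rw [hAdef, this]; simp : Q ∈ A ∪ G1)) hQ2
      · have : Q = E1 := meet3112 Q (hs3 Q hQ3) hQ12
        exact (Finset.disjoint_left.mp hd3
          (by rw [hAdef, this]; simp : Q ∈ A ∪ G1 ∪ G2)) hQ3
    · intro hw
      exact hPnW23 (hw ▸ le_sup_left)
    · intro hw
      exact hPnW31 (hw ▸ le_sup_left)
  have hLrank : ∀ Q ∈ T, finrank F (P.submodule ⊔ Q.submodule :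
      Submodule F (Fin 3 → F)) = 2 := fun Q hQ =>
    QuasiArcAux.finrank_sup_of_ne (Ne.symm (hTP Q hQ))
  -- the line through P and Q meets the line W23 in a 1-dimensional subspace
  have hinter : ∀ Q ∈ T, finrank F ((P.submodule ⊔ Q.submodule) ⊓ W23 :
      Submodule F (Fin 3 → F)) = 1 := by
    intro Q hQ
    have hL2 := hLrank Q hQ
    have hsup3 : finrank F ((P.submodule ⊔ Q.submodule) ⊔ W23 :
        Submodule F (Fin 3 → F)) = 3 := by
      have hle : finrank F ((P.submodule ⊔ Q.submodule) ⊔ W23 :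
          Submodule F (Fin 3 → F)) ≤ 3 := (Submodule.finrank_le _).trans_eq hV3
      have hge : 2 ≤ finrank F ((P.submodule ⊔ Q.submodule) ⊔ W23 :
          Submodule F (Fin 3 → F)) := hL2 ▸ Submodule.finrank_mono le_sup_left
      rcases Nat.lt_or_ge (finrank F ((P.submodule ⊔ Q.submodule) ⊔ W23 :
          Submodule F (Fin 3 → F))) 3 with hlt | hge3
      · exfalso
        have hLe : P.submodule ⊔ Q.submodule = (P.submodule ⊔ Q.submodule) ⊔ W23 :=
          Submodule.eq_of_le_of_finrank_eq le_sup_left (by omega)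
        have hWe : W23 = (P.submodule ⊔ Q.submodule) ⊔ W23 :=
          Submodule.eq_of_le_of_finrank_eq le_sup_right (by rw [hrk23]; omega)
        exact (hLfund Q hQ).2.1 (hLe.trans hWe.symm)
      · omega
    have := Submodule.finrank_sup_add_finrank_inf_eq (P.submodule ⊔ Q.submodule) W23
    rw [hL2, hrk23, hsup3] at this
    omega
  -- the map sending Q to the intersection point of line PQ with line W23
  set f : Projectivization F (Fin 3 → F) → Projectivization F (Fin 3 → F) :=
    fun Q => if hq : finrank F ((P.submodule ⊔ Q.submodule) ⊓ W23 :
      Submodule F (Fin 3 → F)) = 1 then mk'' _ hq else E1 with hfdef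
  have hfQ : ∀ Q ∈ T, (f Q).submodule = (P.submodule ⊔ Q.submodule) ⊓ W23 := by
    intro Q hQ
    rw [hfdef]
    simp only [dif_pos (hinter Q hQ), submodule_mk'']
  set S : Finset (Projectivization F (Fin 3 → F)) :=
    Finset.univ.filter (fun R => R.submodule ≤ W23) with hSdef
  have hScard : S.card = Fintype.card F + 1 := QuasiArcAux.card_points_on_line W23 hrk23
  have hE2S : E2 ∈ S := by
    rw [hSdef]
    simp only [Finset.mem_filter, Finset.mem_univ, true_and]
    exact le_sup_left
  -- the map sends T into S.erase E2
  have hmaps : ∀ Q ∈ T, f Q ∈ S.erase E2 := by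
    intro Q hQ
    rw [Finset.mem_erase]
    constructor
    · intro hfe
      have hle : E2.submodule ≤ P.submodule ⊔ Q.submodule := by
        rw [← hfe, hfQ Q hQ]; exact inf_le_left
      have hsupPE2 : P.submodule ⊔ E2.submodule = W12 :=
        Submodule.eq_of_le_of_finrank_eq (sup_le hPW12 le_sup_right)
          (by rw [QuasiArcAux.finrank_sup_of_ne hPE2, hrk12])
      have hW12le : W12 ≤ P.submodule ⊔ Q.submodule := by
        rw [← hsupPE2]
        exact sup_le le_sup_left hle
      have : P.submodule ⊔ Q.submodule = W12 :=
        (Submodule.eq_of_le_of_finrank_eq hW12le (by rw [hrk12, hLrank Q hQ])).symm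
      exact (hLfund Q hQ).1 this
    · rw [hSdef, Finset.mem_filter]
      exact ⟨Finset.mem_univ _, by rw [hfQ Q hQ]; exact inf_le_right⟩
  -- injectivity via the secant condition
  have hinj : Set.InjOn f T := by
    intro Q hQm Q' hQm' hff
    have hQ : Q ∈ T := hQm
    have hQ' : Q' ∈ T := hQm'
    by_contra hne
    -- the lines PQ and PQ' coincide
    have hfW : (f Q).submodule ≤ W23 := by rw [hfQ Q hQ]; exact inf_le_right
    have hfP : f Q ≠ P := fun he => hPnW23 (he ▸ hfW)
    have hL1 : P.submodule ⊔ (f Q).submodule = P.submodule ⊔ Q.submodule :=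
      Submodule.eq_of_le_of_finrank_eq
        (sup_le le_sup_left (by rw [hfQ Q hQ]; exact inf_le_left))
        (by rw [QuasiArcAux.finrank_sup_of_ne (Ne.symm hfP), hLrank Q hQ])
    have hL2 : P.submodule ⊔ (f Q).submodule = P.submodule ⊔ Q'.submodule := by
      rw [hff]
      exact Submodule.eq_of_le_of_finrank_eq
        (sup_le le_sup_left (by rw [hfQ Q' hQ']; exact inf_le_left))
        (by rw [← hff, QuasiArcAux.finrank_sup_of_ne (Ne.symm hfP), hLrank Q' hQ'])
    have hLL : P.submodule ⊔ Q.submodule = P.submodule ⊔ Q'.submodule :=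
      hL1.symm.trans hL2
    -- apply the secant condition to the line PQ
    obtain ⟨hf1, hf2, hf3⟩ := hLfund Q hQ
    have hsec2 := hsec (P.submodule ⊔ Q.submodule) (hLrank Q hQ) hf1 hf2 hf3
    have hsub : ({P, Q, Q'} : Finset (Projectivization F (Fin 3 → F))) ⊆
        B.filter (fun R => R.submodule ≤ P.submodule ⊔ Q.submodule) := by
      intro R hR
      simp only [Finset.mem_insert, Finset.mem_singleton] at hR
      rw [Finset.mem_filter]
      rcases hR with hR | hR | hR <;> rw [hR]
      · exact ⟨hPB, le_sup_left⟩
      · exact ⟨hTA Q hQ, le_sup_right⟩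
      · exact ⟨hTA Q' hQ', hLL ▸ le_sup_right⟩
    have hcard3 : ({P, Q, Q'} : Finset (Projectivization F (Fin 3 → F))).card = 3 := by
      rw [Finset.card_insert_of_notMem (by simp [Ne.symm (hTP Q hQ), Ne.symm (hTP Q' hQ')]),
        Finset.card_insert_of_notMem (by simp [hne]), Finset.card_singleton]
    have := Finset.card_le_card hsub
    rw [hcard3] at this
    omega
  -- conclude
  have hle := Finset.card_le_card_of_injOn f hmaps hinj
  rw [hTcard, Finset.card_erase_of_mem hE2S, hScard] at hle
  have hq2 : 2 ≤ Fintype.card F := Fintype.one_lt_card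
  rw [Nat.le_div_iff_mul_le (by norm_num : 0 < 2)]
  omega
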